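/- Let (x_α)_{α∈Λ^{<b}} be an absolutely summable family in a unital Banach algebra E. Then (exp x_α)_{α∈Λ^{<b}} is multipliable and its product is invertible. -/

import Mathlib

open Set

set_option linter.unusedSectionVars false
set_option maxHeartbeats 1000000

noncomputable section

/-- Transfinite partial sums of a family indexed by a well-ordered set `Λ` with
least element `a` and supremum `b`.  `F γ` represents `Σ_{α ∈ Λ, α < γ} x α` for
`γ ∈ Λ ∪ {b}`:  the sum over the empty initial segment is `0`, the successor
recursion `F (S β) = x β + F β` holds, and at each limit element the partial
sums converge from the left. -/
def WOSumData {E : Type*} [SeminormedAddCommGroup E] {ι : Type*} [LinearOrder ι]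
    (Λ : Set ι) (a b : ι) (x F : ι → E) : Prop :=
  F a = 0 ∧
  (∀ β ∈ Λ, ∀ γ ∈ Λ ∪ {b}, β < γ → (∀ α ∈ Λ, α ≤ β ∨ γ ≤ α) → F γ = x β + F β) ∧
  (∀ γ ∈ Λ ∪ {b}, a < γ → (∀ β ∈ Λ, β < γ → ∃ α ∈ Λ, β < α ∧ α < γ) →
    ∀ ε > 0, ∃ β₀ ∈ Λ, β₀ < γ ∧ ∀ β ∈ Λ, β₀ ≤ β → β < γ → ‖F β - F γ‖ < ε)

/-- Transfinite partial products of a family indexed by a well-ordered set `Λ` with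
least element `a` and supremum `b`.  `F γ` represents `Π_{α ∈ Λ, α < γ} x α` for
`γ ∈ Λ ∪ {b}`:  the product over the empty initial segment is `1`, the successor
recursion `F (S β) = x β * F β` holds, and at each limit element the partial
products converge from the left. -/
def WOProdData {E : Type*} [NormedRing E] {ι : Type*} [LinearOrder ι]
    (Λ : Set ι) (a b : ι) (x F : ι → E) : Prop :=
  F a = 1 ∧
  (∀ β ∈ Λ, ∀ γ ∈ Λ ∪ {b}, β < γ → (∀ α ∈ Λ, α ≤ β ∨ γ ≤ α) → F γ = x β * F β) ∧
  (∀ γ ∈ Λ ∪ {b}, a < γ → (∀ β ∈ Λ, β < γ → ∃ α ∈ Λ, β < α ∧ α < γ) →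
    ∀ ε > 0, ∃ β₀ ∈ Λ, β₀ < γ ∧ ∀ β ∈ Λ, β₀ ≤ β → β < γ → ‖F β - F γ‖ < ε)

section Aux

open Filter Nat

variable {E : Type*} [NormedRing E] [NormedAlgebra ℝ E] [CompleteSpace E] [NormOneClass E]

lemma myNormBound (y : E) (n : ℕ) : ‖((n ! : ℝ)⁻¹) • y ^ n‖ ≤ ‖y‖ ^ n / n ! := by
  rw [norm_smul, norm_inv, Real.norm_natCast, div_eq_inv_mul]
  gcongr
  exact norm_pow_le y n

lemma myNormExpLe (y : E) : ‖NormedSpace.exp y‖ ≤ Real.exp ‖y‖ := by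
  have h1 : HasSum (fun n : ℕ => ((n ! : ℝ)⁻¹) • y ^ n) (NormedSpace.exp y) :=
    NormedSpace.exp_series_hasSum_exp' y
  have h2 : HasSum (fun n : ℕ => ‖y‖ ^ n / n !) (Real.exp ‖y‖) := by
    rw [Real.exp_eq_exp_ℝ]
    exact NormedSpace.expSeries_div_hasSum_exp ‖y‖
  calc ‖NormedSpace.exp y‖ = ‖∑' n : ℕ, ((n ! : ℝ)⁻¹) • y ^ n‖ := by rw [h1.tsum_eq]
    _ ≤ ∑' n : ℕ, ‖((n ! : ℝ)⁻¹) • y ^ n‖ := norm_tsum_le_tsum_norm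
        (h2.summable.of_nonneg_of_le (fun n => norm_nonneg _) (fun n => myNormBound y n))
    _ ≤ ∑' n : ℕ, ‖y‖ ^ n / n ! := Summable.tsum_le_tsum (fun n => myNormBound y n)
        (h2.summable.of_nonneg_of_le (fun n => norm_nonneg _) (fun n => myNormBound y n))
        h2.summable
    _ = Real.exp ‖y‖ := h2.tsum_eq

lemma myNormExpSubOneLe (y : E) : ‖NormedSpace.exp y - 1‖ ≤ Real.exp ‖y‖ - 1 := by
  have h1 : HasSum (fun n : ℕ => (((n+1) ! : ℝ)⁻¹) • y ^ (n+1)) (NormedSpace.exp y - 1) := by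
    have h := NormedSpace.exp_series_hasSum_exp' (𝕂 := ℝ) y
    have := (hasSum_nat_add_iff' (f := fun n : ℕ => ((n ! : ℝ)⁻¹) • y ^ n) 1).mpr h
    simpa using this
  have h2 : HasSum (fun n : ℕ => ‖y‖ ^ (n+1) / (n+1) !) (Real.exp ‖y‖ - 1) := by
    have h : HasSum (fun n : ℕ => ‖y‖ ^ n / n !) (Real.exp ‖y‖) := by
      rw [Real.exp_eq_exp_ℝ]; exact NormedSpace.expSeries_div_hasSum_exp ‖y‖
    have := (hasSum_nat_add_iff' (f := fun n : ℕ => ‖y‖ ^ n / n !) 1).mpr h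
    simpa using this
  calc ‖NormedSpace.exp y - 1‖ = ‖∑' n : ℕ, (((n+1) ! : ℝ)⁻¹) • y ^ (n+1)‖ := by
        rw [h1.tsum_eq]
    _ ≤ ∑' n : ℕ, ‖(((n+1) ! : ℝ)⁻¹) • y ^ (n+1)‖ := norm_tsum_le_tsum_norm
        (h2.summable.of_nonneg_of_le (fun n => norm_nonneg _) (fun n => myNormBound y (n+1)))
    _ ≤ ∑' n : ℕ, ‖y‖ ^ (n+1) / (n+1) ! := Summable.tsum_le_tsum (fun n => myNormBound y (n+1))
        (h2.summable.of_nonneg_of_le (fun n => norm_nonneg _) (fun n => myNormBound y (n+1)))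
        h2.summable
    _ = Real.exp ‖y‖ - 1 := h2.tsum_eq

end Aux

section Aux2

variable {E : Type*} [NormedRing E] [NormOneClass E]
variable {ι : Type*} {u v : ι → E} {w : ι → ℝ}

lemma myListProd_norm_le (hu : ∀ α, ‖u α‖ ≤ Real.exp (w α)) (l : List ι) :
    ‖(l.map u).prod‖ ≤ Real.exp ((l.map w).sum) := by
  induction l with
  | nil => simp
  | cons a l ih =>
      simp only [List.map_cons, List.prod_cons, List.sum_cons, Real.exp_add]
      exact (norm_mul_le _ _).trans (mul_le_mul (hu a) ih (norm_nonneg _) (Real.exp_pos _).le)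

lemma myListKey (hu : ∀ α, ‖u α‖ ≤ Real.exp (w α))
    (hu1 : ∀ α, ‖u α - 1‖ ≤ Real.exp (w α) - 1) (hw : ∀ α, 0 ≤ w α)
    {l₁ l₂ : List ι} (h : l₁.Sublist l₂) :
    ‖(l₂.map u).prod - (l₁.map u).prod‖ ≤
      Real.exp ((l₂.map w).sum) - Real.exp ((l₁.map w).sum) := by
  induction h with
  | slnil => simp
  | @cons m₁ m₂ a h ih =>
      simp only [List.map_cons, List.prod_cons, List.sum_cons, Real.exp_add]
      have hP2 := myListProd_norm_le hu m₂ (u := u) (w := w)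
      have h1 : ‖u a * (m₂.map u).prod - (m₁.map u).prod‖ ≤
          ‖(u a - 1) * (m₂.map u).prod‖ + ‖(m₂.map u).prod - (m₁.map u).prod‖ := by
        rw [sub_one_mul]
        exact norm_sub_le_norm_sub_add_norm_sub _ _ _
      have h2 : ‖(u a - 1) * (m₂.map u).prod‖ ≤
          (Real.exp (w a) - 1) * Real.exp ((m₂.map w).sum) :=
        (norm_mul_le _ _).trans (mul_le_mul (hu1 a) hP2 (norm_nonneg _)
          (by linarith [Real.one_le_exp (hw a)]))
      nlinarith [Real.exp_pos ((m₂.map w).sum)]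
  | @cons_cons m₁ m₂ a h ih =>
      simp only [List.map_cons, List.prod_cons, List.sum_cons, Real.exp_add]
      rw [← mul_sub]
      refine (norm_mul_le _ _).trans ?_
      have := mul_le_mul (hu a) ih (norm_nonneg _) (Real.exp_pos (w a)).le
      nlinarith []

lemma myListInvA (hinv : ∀ α, u α * v α = 1) (l : List ι) :
    (l.map u).prod * ((l.map v).reverse).prod = 1 := by
  induction l with
  | nil => simp
  | cons a l ih =>
      simp only [List.map_cons, List.prod_cons, List.reverse_cons, List.prod_append,
        List.prod_cons, List.prod_nil, mul_one]
      calc u a * (l.map u).prod * ((l.map v).reverse.prod * v a)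
          = u a * ((l.map u).prod * (l.map v).reverse.prod) * v a := by noncomm_ring
        _ = 1 := by rw [ih, mul_one, hinv]

lemma myListInvB (hinv : ∀ α, v α * u α = 1) (l : List ι) :
    ((l.map v).reverse).prod * (l.map u).prod = 1 := by
  induction l with
  | nil => simp
  | cons a l ih =>
      simp only [List.map_cons, List.prod_cons, List.reverse_cons, List.prod_append,
        List.prod_cons, List.prod_nil, mul_one]
      calc (l.map v).reverse.prod * v a * (u a * (l.map u).prod)
          = (l.map v).reverse.prod * (v a * u a) * (l.map u).prod := by noncomm_ring
        _ = 1 := by rw [hinv, mul_one, ih]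

end Aux2

section Fin

open Filter

variable {ι : Type*} [LinearOrder ι]

lemma mySortSublist {s t : Finset ι} (h : s ⊆ t) :
    (s.sort (· ≥ ·)).Sublist (t.sort (· ≥ ·)) :=
  List.sublist_of_subperm_of_pairwise
    ((Finset.sort_nodup s _).subperm (fun a ha => by
      simpa using h (by simpa using ha)))
    (Finset.pairwise_sort s _) (Finset.pairwise_sort t _)

lemma mySortSum (s : Finset ι) (w : ι → ℝ) : ((s.sort (· ≥ ·)).map w).sum = ∑ α ∈ s, w α := by
  rw [((Finset.sort_perm_toList s _).map w).sum_eq, Finset.sum_map_toList]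

/-- The filter of "finite subsets of `A`, eventually containing any given one". -/
def pF (A : Set ι) : Filter (Finset ι) :=
  ⨅ t : {t : Finset ι // ↑t ⊆ A}, Filter.principal {s | t.1 ⊆ s ∧ ↑s ⊆ A}

lemma pF_mem {A : Set ι} {U : Set (Finset ι)} :
    U ∈ pF A ↔ ∃ t : Finset ι, ↑t ⊆ A ∧ {s | t ⊆ s ∧ ↑s ⊆ A} ⊆ U := by
  have hne : Nonempty {t : Finset ι // ↑t ⊆ A} := ⟨⟨∅, by simp⟩⟩
  have hdir : Directed (· ≥ ·) (fun t : {t : Finset ι // ↑t ⊆ A} =>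
      {s : Finset ι | t.1 ⊆ s ∧ ↑s ⊆ A}) := by
    rintro ⟨t₁, h₁⟩ ⟨t₂, h₂⟩
    refine ⟨⟨t₁ ∪ t₂, by simp [Set.union_subset_iff, h₁, h₂, Finset.coe_union]⟩, ?_, ?_⟩
    · rintro s ⟨hs1, hs2⟩
      exact ⟨(Finset.subset_union_left).trans hs1, hs2⟩
    · rintro s ⟨hs1, hs2⟩
      exact ⟨(Finset.subset_union_right).trans hs1, hs2⟩
  rw [pF, (Filter.hasBasis_iInf_principal hdir).mem_iff]
  constructor
  · rintro ⟨⟨t, ht⟩, -, hsub⟩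
    exact ⟨t, ht, hsub⟩
  · rintro ⟨t, ht, hsub⟩
    exact ⟨⟨t, ht⟩, trivial, hsub⟩

lemma pF_neBot (A : Set ι) : (pF A).NeBot := by
  refine Filter.neBot_iff.mpr (fun h => ?_)
  have : (∅ : Set (Finset ι)) ∈ pF A := by rw [h]; exact Filter.mem_bot
  rcases pF_mem.mp this with ⟨t, ht, hsub⟩
  exact absurd (hsub ⟨le_refl t, ht⟩) (by simp)

lemma pF_sets_mem {A : Set ι} {t : Finset ι} (ht : ↑t ⊆ A) :
    {s : Finset ι | t ⊆ s ∧ ↑s ⊆ A} ∈ pF A := pF_mem.mpr ⟨t, ht, le_refl _⟩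

lemma myDeltaBound (S δ : ℝ) : Real.exp S - Real.exp (S - δ) ≤ Real.exp S * δ := by
  have h1 : Real.exp (S - δ) = Real.exp S * Real.exp (-δ) := by
    rw [← Real.exp_add]; ring_nf
  have h2 : 1 - δ ≤ Real.exp (-δ) := by linarith [Real.add_one_le_exp (-δ)]
  nlinarith [Real.exp_pos S]

variable {E : Type*} [NormedRing E] [NormOneClass E] [CompleteSpace E]

lemma myConverges (A : Set ι) (S : ℝ) (w : ι → ℝ) (P : Finset ι → E)
    (hP : ∀ s t : Finset ι, s ⊆ t →
      ‖P t - P s‖ ≤ Real.exp (∑ α ∈ t, w α) - Real.exp (∑ α ∈ s, w α))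
    (hbd : ∀ t : Finset ι, ↑t ⊆ A → ∑ α ∈ t, w α ≤ S)
    (happ : ∀ ε > 0, ∃ t₀ : Finset ι, ↑t₀ ⊆ A ∧ S - ε < ∑ α ∈ t₀, w α) :
    ∃ L : E, Filter.Tendsto P (pF A) (nhds L) ∧
      ∀ t₀ : Finset ι, ↑t₀ ⊆ A → ‖L - P t₀‖ ≤ Real.exp S - Real.exp (∑ α ∈ t₀, w α) := by
  have hne := pF_neBot A
  have key : ∀ δ > 0, ∃ t₀ : Finset ι, ↑t₀ ⊆ A ∧
      ∀ s : Finset ι, t₀ ⊆ s → ↑s ⊆ A → ‖P s - P t₀‖ ≤ Real.exp S * δ := by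
    intro δ hδ
    obtain ⟨t₀, ht₀, hgt⟩ := happ δ hδ
    refine ⟨t₀, ht₀, fun s hts hsA => ?_⟩
    refine (hP t₀ s hts).trans ?_
    have h1 : ∑ α ∈ s, w α ≤ S := hbd s hsA
    have h2 : Real.exp (S - δ) ≤ Real.exp (∑ α ∈ t₀, w α) := Real.exp_le_exp.mpr (by linarith)
    have := myDeltaBound S δ
    have := Real.exp_le_exp.mpr h1
    linarith
  have hcauchy : Cauchy (Filter.map P (pF A)) := by
    refine Metric.cauchy_iff.mpr ⟨Filter.map_neBot, fun ε hε => ?_⟩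
    have hδ : 0 < ε / (3 * Real.exp S) := by positivity
    obtain ⟨t₀, ht₀, hb⟩ := key _ hδ
    refine ⟨P '' {s | t₀ ⊆ s ∧ ↑s ⊆ A}, Filter.image_mem_map (pF_sets_mem ht₀), ?_⟩
    rintro - ⟨s₁, hs₁, rfl⟩ - ⟨s₂, hs₂, rfl⟩
    have h1 := hb s₁ hs₁.1 hs₁.2
    have h2 := hb s₂ hs₂.1 hs₂.2
    have hE : Real.exp S * (ε / (3 * Real.exp S)) = ε / 3 := by
      field_simp
    rw [dist_eq_norm]
    calc ‖P s₁ - P s₂‖ ≤ ‖P s₁ - P t₀‖ + ‖P t₀ - P s₂‖ := norm_sub_le_norm_sub_add_norm_sub _ _ _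
      _ ≤ ε / 3 + ε / 3 := by
          rw [← hE]
          have h2' : ‖P t₀ - P s₂‖ ≤ Real.exp S * (ε / (3 * Real.exp S)) := by
            rw [norm_sub_rev]; exact h2
          exact add_le_add h1 h2'
      _ < ε := by linarith
  obtain ⟨L, hL'⟩ := CompleteSpace.complete hcauchy
  have hL : Filter.Tendsto P (pF A) (nhds L) := hL'
  refine ⟨L, hL, fun t₀ ht₀ => ?_⟩
  have htd : Filter.Tendsto (fun s => ‖P s - P t₀‖) (pF A) (nhds ‖L - P t₀‖) :=
    ((hL.sub_const (P t₀)).norm)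
  refine le_of_tendsto htd ?_
  filter_upwards [pF_sets_mem ht₀] with s hs
  refine (hP t₀ s hs.1).trans ?_
  have := Real.exp_le_exp.mpr (hbd s hs.2)
  linarith

end Fin

section SumBounds

lemma mySumBounds {ι : Type*} [LinearOrder ι] {Λ : Set ι} {a b : ι} (hWF : Λ.IsWF)
    (ha : IsLeast Λ a) (hb : IsLUB Λ b) {w F : ι → ℝ} (hw : ∀ α, 0 ≤ w α)
    (hF : WOSumData Λ a b w F) :
    ∀ γ ∈ Λ ∪ {b},
      (∀ t : Finset ι, ↑t ⊆ Λ ∩ Iio γ → ∑ α ∈ t, w α ≤ F γ) ∧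
      (∀ ε > 0, ∃ t : Finset ι, ↑t ⊆ Λ ∩ Iio γ ∧ F γ - ε < ∑ α ∈ t, w α) := by
  obtain ⟨hF0, hFsucc, hFlim⟩ := hF
  have hWF' : (Λ ∪ {b}).IsWF := hWF.union Set.isWF_singleton
  intro γ₀ hγ₀
  refine Set.WellFoundedOn.induction (P := fun γ =>
    (∀ t : Finset ι, ↑t ⊆ Λ ∩ Iio γ → ∑ α ∈ t, w α ≤ F γ) ∧
    (∀ ε > 0, ∃ t : Finset ι, ↑t ⊆ Λ ∩ Iio γ ∧ F γ - ε < ∑ α ∈ t, w α)) hWF' hγ₀ ?_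
  intro γ hγ ih
  have haγ : a ≤ γ := by
    rcases hγ with h | h
    · exact ha.2 h
    · rw [mem_singleton_iff] at h; subst h; exact hb.1 ha.1
  rcases eq_or_lt_of_le haγ with rfl | hlt
  · -- γ = a
    have hempty : Λ ∩ Iio a = ∅ := by
      ext α; simp only [mem_inter_iff, mem_Iio, mem_empty_iff_false, iff_false, not_and]
      intro hαΛ; exact not_lt.mpr (ha.2 hαΛ)
    constructor
    · intro t ht
      have : t = ∅ := by
        rw [← Finset.coe_eq_empty, ← subset_empty_iff, ← hempty]; exact ht
      subst this; simp [hF0]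
    · intro ε hε
      exact ⟨∅, by simp, by simp [hF0]; linarith⟩
  · by_cases hsucc : ∃ β ∈ Λ, β < γ ∧ ∀ α ∈ Λ, α ≤ β ∨ γ ≤ α
    · obtain ⟨β, hβΛ, hβγ, hbetween⟩ := hsucc
      have hFγ : F γ = w β + F β := hFsucc β hβΛ γ hγ hβγ hbetween
      obtain ⟨ih1, ih2⟩ := ih β (Or.inl hβΛ) hβγ
      constructor
      · intro t ht
        have h1 : ↑(t.erase β) ⊆ Λ ∩ Iio β := by
          intro α hα
          rw [Finset.coe_erase, mem_diff] at hα
          obtain ⟨hα1, hα2⟩ := hα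
          obtain ⟨hαΛ, hαγ⟩ := ht hα1
          refine ⟨hαΛ, ?_⟩
          rcases hbetween α hαΛ with h | h
          · rcases lt_or_eq_of_le h with h' | h'
            · exact h'
            · exact absurd h' (by simpa using hα2)
          · exact absurd (mem_Iio.mp hαγ) (not_lt.mpr h)
        have h2 := ih1 (t.erase β) h1
        by_cases hβt : β ∈ t
        · rw [← Finset.sum_erase_add t w hβt, hFγ]; linarith
        · rw [Finset.erase_eq_of_notMem hβt] at h2; rw [hFγ]; linarith [hw β]
      · intro ε hε
        obtain ⟨t, ht, hgt⟩ := ih2 ε hε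
        have hβt : β ∉ t := fun h => absurd (mem_Iio.mp (ht h).2) (lt_irrefl β)
        refine ⟨insert β t, ?_, ?_⟩
        · rw [Finset.coe_insert, insert_subset_iff]
          exact ⟨⟨hβΛ, hβγ⟩, ht.trans (inter_subset_inter_right _ (Iio_subset_Iio hβγ.le))⟩
        · rw [Finset.sum_insert hβt, hFγ]; linarith
    · push_neg at hsucc
      have hlim : ∀ β ∈ Λ, β < γ → ∃ α ∈ Λ, β < α ∧ α < γ := hsucc
      constructor
      · intro t ht
        by_contra hcon
        push_neg at hcon
        set ε := ∑ α ∈ t, w α - F γ with hεdef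
        have hεpos : 0 < ε := by simp only [hεdef]; linarith
        obtain ⟨β₀, hβ₀Λ, hβ₀γ, hclose⟩ := hFlim γ hγ hlt hlim ε hεpos
        obtain ⟨β₁, hβ₁Λ, hβ₁γ, hβ₀β₁, hβ₁t⟩ :
            ∃ β₁ ∈ Λ, β₁ < γ ∧ β₀ ≤ β₁ ∧ ∀ α ∈ t, α ≤ β₁ := by
          rcases t.eq_empty_or_nonempty with rfl | hne
          · exact ⟨β₀, hβ₀Λ, hβ₀γ, le_refl _, by simp⟩
          · obtain ⟨hmΛ, hmγ⟩ := ht (t.max'_mem hne)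
            rcases le_total (t.max' hne) β₀ with h | h
            · exact ⟨β₀, hβ₀Λ, hβ₀γ, le_refl _,
                fun α hα => (t.le_max' α hα).trans h⟩
            · exact ⟨t.max' hne, hmΛ, mem_Iio.mp hmγ, h, fun α hα => t.le_max' α hα⟩
        obtain ⟨α, hαΛ, hβ₁α, hαγ⟩ := hlim β₁ hβ₁Λ hβ₁γ
        have h1 : ∑ α ∈ t, w α ≤ F α :=
          (ih α (Or.inl hαΛ) hαγ).1 t (fun α' hα' =>
            ⟨(ht hα').1, mem_Iio.mpr (lt_of_le_of_lt (hβ₁t α' (by simpa using hα')) hβ₁α)⟩)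
        have h2 := hclose α hαΛ (hβ₀β₁.trans hβ₁α.le) hαγ
        rw [Real.norm_eq_abs, abs_lt] at h2
        simp only [hεdef] at h2
        linarith
      · intro ε hε
        obtain ⟨β₀, hβ₀Λ, hβ₀γ, hclose⟩ := hFlim γ hγ hlt hlim (ε/2) (by linarith)
        obtain ⟨t, ht, hgt⟩ := (ih β₀ (Or.inl hβ₀Λ) hβ₀γ).2 (ε/2) (by linarith)
        refine ⟨t, ht.trans (inter_subset_inter_right _ (Iio_subset_Iio hβ₀γ.le)), ?_⟩
        have h2 := hclose β₀ hβ₀Λ (le_refl _) hβ₀γ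
        rw [Real.norm_eq_abs, abs_lt] at h2
        linarith

end SumBounds

section OP

open Filter

variable {E : Type*} [NormedRing E] [NormOneClass E] {ι : Type*} [LinearOrder ι]

/-- Ordered product over a finset, in decreasing order. -/
def oP (u : ι → E) (s : Finset ι) : E := ((s.sort (· ≥ ·)).map u).prod

/-- Ordered product over a finset, in increasing order. -/
def oQ (v : ι → E) (s : Finset ι) : E := (((s.sort (· ≥ ·)).map v).reverse).prod

lemma oP_est {u : ι → E} {w : ι → ℝ} (hu : ∀ α, ‖u α‖ ≤ Real.exp (w α))
    (hu1 : ∀ α, ‖u α - 1‖ ≤ Real.exp (w α) - 1) (hw : ∀ α, 0 ≤ w α)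
    {s t : Finset ι} (h : s ⊆ t) :
    ‖oP u t - oP u s‖ ≤ Real.exp (∑ α ∈ t, w α) - Real.exp (∑ α ∈ s, w α) := by
  have := myListKey hu hu1 hw (mySortSublist h)
  rwa [mySortSum, mySortSum] at this

lemma oQ_est {v : ι → E} {w : ι → ℝ} (hv : ∀ α, ‖v α‖ ≤ Real.exp (w α))
    (hv1 : ∀ α, ‖v α - 1‖ ≤ Real.exp (w α) - 1) (hw : ∀ α, 0 ≤ w α)
    {s t : Finset ι} (h : s ⊆ t) :
    ‖oQ v t - oQ v s‖ ≤ Real.exp (∑ α ∈ t, w α) - Real.exp (∑ α ∈ s, w α) := by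
  have key := myListKey hv hv1 hw (mySortSublist h).reverse
  rw [oQ, oQ, ← List.map_reverse, ← List.map_reverse]
  refine key.trans (le_of_eq ?_)
  rw [List.map_reverse, List.map_reverse, List.sum_reverse, List.sum_reverse,
    mySortSum, mySortSum]

lemma oP_insert (u : ι → E) {β : ι} {s : Finset ι} (h : ∀ α ∈ s, α < β) :
    oP u (insert β s) = u β * oP u s := by
  classical
  have hβs : β ∉ s := fun hm => lt_irrefl β (h β hm)
  rw [oP, oP, Finset.sort_insert (r := (· ≥ ·)) (fun c hc => (h c hc).le) hβs,
    List.map_cons, List.prod_cons]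

lemma oP_oQ {u v : ι → E} (hinv : ∀ α, u α * v α = 1) (s : Finset ι) :
    oP u s * oQ v s = 1 := myListInvA hinv _

lemma oQ_oP {u v : ι → E} (hinv : ∀ α, v α * u α = 1) (s : Finset ι) :
    oQ v s * oP u s = 1 := myListInvB hinv _

end OP

/-- If a family in a unital Banach algebra is absolutely summable, then the family
of its exponentials is multipliable and the product is invertible. -/
theorem stmt11 {E : Type*} [NormedRing E] [NormedAlgebra ℝ E] [CompleteSpace E] [NormOneClass E]
    {Λ : Set (WithTop ℝ)} {a b : WithTop ℝ} (hWF : Λ.IsWF)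
    (ha : IsLeast Λ a) (hb : IsLUB Λ b)
    (x : WithTop ℝ → E)
    (habs : ∃ F : WithTop ℝ → ℝ, WOSumData Λ a b (fun α => ‖x α‖) F) :
    ∃ G : WithTop ℝ → E,
      WOProdData Λ a b (fun α => NormedSpace.exp (x α)) G ∧ IsUnit (G b) := by
  classical
  open Filter in
  obtain ⟨F, hFdata⟩ := habs
  set w : WithTop ℝ → ℝ := fun α => ‖x α‖ with hwdef
  have hw : ∀ α, 0 ≤ w α := fun α => norm_nonneg _
  set u : WithTop ℝ → E := fun α => NormedSpace.exp (x α) with hudef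
  set v : WithTop ℝ → E := fun α => NormedSpace.exp (-x α) with hvdef
  have hu : ∀ α, ‖u α‖ ≤ Real.exp (w α) := fun α => myNormExpLe _
  have hu1 : ∀ α, ‖u α - 1‖ ≤ Real.exp (w α) - 1 := fun α => myNormExpSubOneLe _
  have hv : ∀ α, ‖v α‖ ≤ Real.exp (w α) := fun α => by
    have := myNormExpLe (-x α)
    rwa [norm_neg] at this
  have hv1 : ∀ α, ‖v α - 1‖ ≤ Real.exp (w α) - 1 := fun α => by
    have := myNormExpSubOneLe (-x α)
    rwa [norm_neg] at this
  have huv : ∀ α, u α * v α = 1 := fun α => by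
    rw [hudef, hvdef]
    rw [← NormedSpace.exp_add_of_commute_of_mem_ball (𝕂 := ℝ) ((Commute.refl (x α)).neg_right)
      ((NormedSpace.expSeries_radius_eq_top ℝ E).symm ▸ edist_lt_top _ _)
      ((NormedSpace.expSeries_radius_eq_top ℝ E).symm ▸ edist_lt_top _ _)]
    simp [NormedSpace.exp_zero]
  have hvu : ∀ α, v α * u α = 1 := fun α => by
    rw [hudef, hvdef]
    rw [← NormedSpace.exp_add_of_commute_of_mem_ball (𝕂 := ℝ) ((Commute.refl (x α)).neg_left)
      ((NormedSpace.expSeries_radius_eq_top ℝ E).symm ▸ edist_lt_top _ _)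
      ((NormedSpace.expSeries_radius_eq_top ℝ E).symm ▸ edist_lt_top _ _)]
    simp [NormedSpace.exp_zero]
  have hbounds := mySumBounds hWF ha hb hw hFdata
  have hconv : ∀ γ ∈ Λ ∪ {b}, ∃ L, Tendsto (oP u) (pF (Λ ∩ Iio γ)) (nhds L) ∧
      ∀ t₀ : Finset (WithTop ℝ), ↑t₀ ⊆ Λ ∩ Iio γ →
        ‖L - oP u t₀‖ ≤ Real.exp (F γ) - Real.exp (∑ α ∈ t₀, w α) := fun γ hγ =>
    myConverges _ (F γ) w (oP u) (fun s t h => oP_est hu hu1 hw h)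
      (hbounds γ hγ).1 (hbounds γ hγ).2
  haveI : Nonempty E := ⟨1⟩
  set G : WithTop ℝ → E := fun γ => limUnder (pF (Λ ∩ Iio γ)) (oP u) with hGdef
  have hGtend : ∀ γ ∈ Λ ∪ {b}, Tendsto (oP u) (pF (Λ ∩ Iio γ)) (nhds (G γ)) := by
    intro γ hγ
    obtain ⟨L, hL, -⟩ := hconv γ hγ
    haveI := pF_neBot (Λ ∩ Iio γ)
    rw [hGdef]
    simpa only [hL.limUnder_eq] using hL
  have hGbound : ∀ γ ∈ Λ ∪ {b}, ∀ t₀ : Finset (WithTop ℝ), ↑t₀ ⊆ Λ ∩ Iio γ →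
      ‖G γ - oP u t₀‖ ≤ Real.exp (F γ) - Real.exp (∑ α ∈ t₀, w α) := by
    intro γ hγ t₀ ht₀
    obtain ⟨L, hL, hLb⟩ := hconv γ hγ
    haveI := pF_neBot (Λ ∩ Iio γ)
    have : G γ = L := by rw [hGdef]; exact hL.limUnder_eq
    rw [this]
    exact hLb t₀ ht₀
  have hFmono : ∀ β ∈ Λ, ∀ γ ∈ Λ ∪ {b}, β < γ → F β ≤ F γ := by
    intro β hβ γ hγ hβγ
    by_contra hcon
    push_neg at hcon
    obtain ⟨t, ht, hgt⟩ := (hbounds β (Or.inl hβ)).2 (F β - F γ) (by linarith)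
    have := (hbounds γ hγ).1 t
      (ht.trans (inter_subset_inter_right _ (Iio_subset_Iio hβγ.le)))
    linarith
  refine ⟨G, ⟨?_, ?_, ?_⟩, ?_⟩
  · -- G a = 1
    haveI := pF_neBot (Λ ∩ Iio a)
    have hemp : Λ ∩ Iio a = ∅ := by
      ext α
      simp only [mem_inter_iff, mem_Iio, mem_empty_iff_false, iff_false, not_and]
      intro hαΛ; exact not_lt.mpr (ha.2 hαΛ)
    have h1 : Tendsto (oP u) (pF (Λ ∩ Iio a)) (nhds 1) := by
      have heq : ∀ᶠ s in pF (Λ ∩ Iio a), oP u s = 1 := by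
        filter_upwards [pF_sets_mem (t := ∅) (by simp)] with s hs
        have : s = ∅ := by
          rw [← Finset.coe_eq_empty, ← subset_empty_iff, ← hemp]
          exact hs.2
        rw [this, oP]; simp
      exact (Filter.tendsto_congr' heq).mpr tendsto_const_nhds
    exact tendsto_nhds_unique (hGtend a (Or.inl ha.1)) h1
  · -- successor
    intro β hβ γ hγ hβγ hbtw
    haveI := pF_neBot (Λ ∩ Iio β)
    have hsub : Λ ∩ Iio β ⊆ Λ ∩ Iio γ :=
      inter_subset_inter_right _ (Iio_subset_Iio hβγ.le)
    have hmap : Tendsto (fun s => insert β s) (pF (Λ ∩ Iio β)) (pF (Λ ∩ Iio γ)) := by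
      rw [Filter.tendsto_def]
      intro U hU
      obtain ⟨t, ht, hUsub⟩ := pF_mem.mp hU
      refine pF_mem.mpr ⟨t.erase β, ?_, ?_⟩
      · intro α hα
        rw [Finset.coe_erase, mem_diff] at hα
        obtain ⟨hα1, hα2⟩ := hα
        obtain ⟨hαΛ, hαγ⟩ := ht hα1
        refine ⟨hαΛ, ?_⟩
        rcases hbtw α hαΛ with h | h
        · rcases lt_or_eq_of_le h with h' | h'
          · exact h'
          · exact absurd h' (by simpa using hα2)
        · exact absurd (mem_Iio.mp hαγ) (not_lt.mpr h)
      · rintro s ⟨hts, hsA⟩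
        refine hUsub ⟨?_, ?_⟩
        · intro α hα
          by_cases hαβ : α = β
          · subst hαβ; exact Finset.mem_insert_self _ _
          · exact Finset.mem_insert_of_mem (hts (Finset.mem_erase.mpr ⟨hαβ, hα⟩))
        · rw [Finset.coe_insert, insert_subset_iff]
          exact ⟨⟨hβ, hβγ⟩, hsA.trans hsub⟩
    have h1 : Tendsto (fun s => oP u (insert β s)) (pF (Λ ∩ Iio β)) (nhds (G γ)) :=
      (hGtend γ hγ).comp hmap
    have heq : ∀ᶠ s in pF (Λ ∩ Iio β), oP u (insert β s) = u β * oP u s := by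
      filter_upwards [pF_sets_mem (t := ∅) (by simp)] with s hs
      exact oP_insert u (fun α hα => (hs.2 hα).2)
    have h2 : Tendsto (fun s => u β * oP u s) (pF (Λ ∩ Iio β)) (nhds (u β * G β)) :=
      (hGtend β (Or.inl hβ)).const_mul _
    exact tendsto_nhds_unique ((Filter.tendsto_congr' heq).mp h1) h2
  · -- limit
    intro γ hγ haγ hlim ε hε
    have hEpos := Real.exp_pos (F γ)
    set δ := ε / (5 * Real.exp (F γ)) with hδdef
    have hδ : 0 < δ := by positivity
    obtain ⟨t₀, ht₀, hgt⟩ := (hbounds γ hγ).2 δ hδ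
    obtain ⟨β₀, hβ₀Λ, hβ₀γ, hsmall⟩ :
        ∃ β₀ ∈ Λ, β₀ < γ ∧ ∀ α ∈ t₀, α < β₀ := by
      rcases t₀.eq_empty_or_nonempty with rfl | hne
      · exact ⟨a, ha.1, haγ, by simp⟩
      · obtain ⟨hmΛ, hmγ⟩ := ht₀ (t₀.max'_mem hne)
        obtain ⟨β₀, hβ₀Λ, hmβ₀, hβ₀γ⟩ := hlim _ hmΛ (mem_Iio.mp hmγ)
        exact ⟨β₀, hβ₀Λ, hβ₀γ, fun α hα => lt_of_le_of_lt (t₀.le_max' α hα) hmβ₀⟩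
    refine ⟨β₀, hβ₀Λ, hβ₀γ, ?_⟩
    intro β hβΛ hβ₀β hβγ
    have ht₀β : ↑t₀ ⊆ Λ ∩ Iio β := fun α' hα' =>
      ⟨(ht₀ hα').1, mem_Iio.mpr (lt_of_lt_of_le (hsmall α' (by simpa using hα')) hβ₀β)⟩
    have h1 := hGbound β (Or.inl hβΛ) t₀ ht₀β
    have h2 := hGbound γ hγ t₀ ht₀
    have hFβγ : F β ≤ F γ := hFmono β hβΛ γ hγ hβγ
    have hexpmono : Real.exp (F β) ≤ Real.exp (F γ) := Real.exp_le_exp.mpr hFβγ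
    have hmono2 : Real.exp (F γ - δ) ≤ Real.exp (∑ α ∈ t₀, w α) :=
      Real.exp_le_exp.mpr (by linarith)
    have hd := myDeltaBound (F γ) δ
    have hfield : Real.exp (F γ) * δ = ε / 5 := by
      rw [hδdef]; field_simp
    have hcalc : ‖G β - G γ‖ ≤ ‖G β - oP u t₀‖ + ‖oP u t₀ - G γ‖ :=
      norm_sub_le_norm_sub_add_norm_sub _ _ _
    have h2' : ‖oP u t₀ - G γ‖ ≤ Real.exp (F γ) - Real.exp (∑ α ∈ t₀, w α) := by
      rw [norm_sub_rev]; exact h2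
    linarith
  · -- IsUnit (G b)
    have hγb : b ∈ Λ ∪ {b} := Or.inr rfl
    haveI := pF_neBot (Λ ∩ Iio b)
    obtain ⟨H, hH, -⟩ := myConverges (Λ ∩ Iio b) (F b) w (oQ v)
      (fun s t h => oQ_est hv hv1 hw h) (hbounds b hγb).1 (hbounds b hγb).2
    have h1 : Tendsto (fun s => oP u s * oQ v s) (pF (Λ ∩ Iio b))
        (nhds (G b * H)) := (hGtend b hγb).mul hH
    have h1' : Tendsto (fun s : Finset (WithTop ℝ) => oP u s * oQ v s) (pF (Λ ∩ Iio b))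
        (nhds 1) := by
      have : (fun s : Finset (WithTop ℝ) => oP u s * oQ v s) = fun _ => (1 : E) :=
        funext (oP_oQ huv)
      rw [this]; exact tendsto_const_nhds
    have hGH : G b * H = 1 := tendsto_nhds_unique h1 h1'
    have h3 : Tendsto (fun s => oQ v s * oP u s) (pF (Λ ∩ Iio b))
        (nhds (H * G b)) := hH.mul (hGtend b hγb)
    have h3' : Tendsto (fun s : Finset (WithTop ℝ) => oQ v s * oP u s) (pF (Λ ∩ Iio b))
        (nhds 1) := by
      have : (fun s : Finset (WithTop ℝ) => oQ v s * oP u s) = fun _ => (1 : E) :=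
        funext (oQ_oP hvu)
      rw [this]; exact tendsto_const_nhds
    have hHG : H * G b = 1 := tendsto_nhds_unique h3 h3'
    exact ⟨⟨G b, H, hGH, hHG⟩, rfl⟩
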